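/- Let 1 ≤ ℓ ≤ k be natural numbers and d a positive integer. Then ∑_{j=ℓ}^{k} (-1)^{j-ℓ} C(k,j) C(j-1,ℓ-1) d^j is an integer whose absolute value is at most C(k-1,ℓ-1)·(d^k + k - 1), provided ℓ < k. -/

import Mathlib

private lemma choose_key {a i k : ℕ} (h : a + 1 + i ≤ k) :
    (a + 1 + i) * k.choose (a + 1 + i) * (a + i).choose a
      = k * (k - 1).choose a * (k - (a + 1)).choose i := by
  obtain ⟨m, rfl⟩ : ∃ m, k = m + 1 := ⟨k - 1, by omega⟩
  have h1 : (m + 1) * m.choose (a + i) = (m + 1).choose (a + i + 1) * (a + i + 1) :=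
    Nat.add_one_mul_choose_eq m (a + i)
  have h2 : m.choose (a + i) * (a + i).choose a = m.choose a * (m - a).choose i := by
    have := Nat.choose_mul (n := m) (k := a + i) (s := a) (by omega)
    simpa [Nat.add_sub_cancel_left] using this
  have e1 : a + 1 + i = a + i + 1 := by omega
  have e2 : m + 1 - 1 = m := by omega
  have e3 : m + 1 - (a + 1) = m - a := by omega
  rw [e1, e2, e3]
  calc (a + i + 1) * (m + 1).choose (a + i + 1) * (a + i).choose a
      = ((m + 1).choose (a + i + 1) * (a + i + 1)) * (a + i).choose a := by ring
    _ = ((m + 1) * m.choose (a + i)) * (a + i).choose a := by rw [← h1]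
    _ = (m + 1) * (m.choose (a + i) * (a + i).choose a) := by ring
    _ = (m + 1) * (m.choose a * (m - a).choose i) := by rw [h2]
    _ = (m + 1) * m.choose a * (m - a).choose i := by ring

private lemma hasDeriv_F (l k : ℕ) (hl : 1 ≤ l) (hk : l ≤ k) (x : ℝ) :
    HasDerivAt (fun y : ℝ => ∑ j ∈ Finset.Icc l k,
        (-1 : ℝ) ^ (j - l) * (k.choose j : ℝ) * ((j - 1).choose (l - 1) : ℝ) * y ^ j)
      ((k : ℝ) * ((k - 1).choose (l - 1) : ℝ) * x ^ (l - 1) * (1 - x) ^ (k - l)) x := by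
  have hd : HasDerivAt (fun y : ℝ => ∑ j ∈ Finset.Icc l k,
      (-1 : ℝ) ^ (j - l) * (k.choose j : ℝ) * ((j - 1).choose (l - 1) : ℝ) * y ^ j)
      (∑ j ∈ Finset.Icc l k,
        (-1 : ℝ) ^ (j - l) * (k.choose j : ℝ) * ((j - 1).choose (l - 1) : ℝ)
          * ((j : ℝ) * x ^ (j - 1))) x := by
    apply HasDerivAt.fun_sum
    intro j _
    exact (hasDerivAt_pow j x).const_mul _
  convert hd using 1
  obtain ⟨a, rfl⟩ : ∃ a, l = a + 1 := ⟨l - 1, by omega⟩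
  rw [← Finset.Ico_add_one_right_eq_Icc, Finset.sum_Ico_eq_sum_range]
  have hrange : k + 1 - (a + 1) = (k - (a + 1)) + 1 := by omega
  rw [hrange]
  have hexp : (1 - x) ^ (k - (a + 1)) = ((-x) + 1) ^ (k - (a + 1)) := by ring_nf
  rw [hexp, add_pow, Finset.mul_sum]
  apply Finset.sum_congr rfl
  intro i hi
  have hik : i ≤ k - (a + 1) := by
    have := Finset.mem_range.mp hi; omega
  have key := choose_key (a := a) (i := i) (k := k) (by omega)
  have keyR : ((a + 1 + i : ℕ) : ℝ) * (k.choose (a + 1 + i) : ℝ) * ((a + i).choose a : ℝ)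
      = (k : ℝ) * ((k - 1).choose a : ℝ) * ((k - (a + 1)).choose i : ℝ) := by
    exact_mod_cast congrArg (Nat.cast : ℕ → ℝ) key
  have e1 : a + 1 + i - (a + 1) = i := by omega
  have e2 : a + 1 + i - 1 = a + i := by omega
  have e3 : a + 1 - 1 = a := by omega
  rw [e1, e2, e3]
  push_cast at keyR ⊢
  linear_combination (-((-1 : ℝ) ^ i * x ^ a * x ^ i)) * keyR

private lemma mvt_le {f g f' g' : ℝ → ℝ}
    (hf : ∀ x, HasDerivAt f (f' x) x) (hg : ∀ x, HasDerivAt g (g' x) x)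
    {a b : ℝ} (hab : a ≤ b) (h : ∀ x ∈ Set.Icc a b, f' x ≤ g' x) :
    f b - f a ≤ g b - g a := by
  have hmono : MonotoneOn (fun x => g x - f x) (Set.Icc a b) := by
    apply monotoneOn_of_deriv_nonneg (convex_Icc a b)
    · exact fun x _ => ((hg x).sub (hf x)).continuousAt.continuousWithinAt
    · exact fun x _ => ((hg x).sub (hf x)).differentiableAt.differentiableWithinAt
    · intro x hx
      rw [(show HasDerivAt (fun x => g x - f x) (g' x - f' x) x from (hg x).sub (hf x)).deriv]
      rw [interior_Icc] at hx
      have := h x ⟨hx.1.le, hx.2.le⟩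
      linarith
  have h2 := hmono (Set.left_mem_Icc.2 hab) (Set.right_mem_Icc.2 hab) hab
  simp only [] at h2
  linarith

theorem stmt_17 (l k d : ℕ) (hl : 1 ≤ l) (hk : l < k) (hd : 1 ≤ d) :
    |∑ j ∈ Finset.Icc l k,
        (-1 : ℤ) ^ (j - l) * (k.choose j : ℤ) * ((j - 1).choose (l - 1) : ℤ) * (d : ℤ) ^ j|
      ≤ ((k - 1).choose (l - 1) : ℤ) * ((d : ℤ) ^ k + (k : ℤ) - 1) := by
  have hlk : l ≤ k := hk.le
  set F : ℝ → ℝ := fun y => ∑ j ∈ Finset.Icc l k,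
      (-1 : ℝ) ^ (j - l) * (k.choose j : ℝ) * ((j - 1).choose (l - 1) : ℝ) * y ^ j with hFdef
  set C : ℝ := ((k - 1).choose (l - 1) : ℝ) with hCdef
  have hC0 : 0 < C := by
    have h : 0 < (k - 1).choose (l - 1) := Nat.choose_pos (by omega)
    rw [hCdef]
    exact_mod_cast h
  have hder : ∀ x : ℝ, HasDerivAt F ((k : ℝ) * C * x ^ (l - 1) * (1 - x) ^ (k - l)) x :=
    fun x => hasDeriv_F l k hl hlk x
  have hF0 : F 0 = 0 := by
    apply Finset.sum_eq_zero
    intro j hj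
    have : l ≤ j := (Finset.mem_Icc.mp hj).1
    rw [zero_pow (by omega), mul_zero]
  have hdR : (1 : ℝ) ≤ (d : ℝ) := by exact_mod_cast hd
  have hk0 : (0 : ℝ) < (k : ℝ) := by exact_mod_cast (by omega : 0 < k)
  -- F 1 ≥ 0
  have h1 : (0 : ℝ) - 0 ≤ F 1 - F 0 := by
    apply mvt_le (f' := fun _ => (0 : ℝ)) (fun x => hasDerivAt_const x 0) hder zero_le_one
    intro x hx
    have hx1 : (0 : ℝ) ≤ x := hx.1
    have hx2 : (0 : ℝ) ≤ 1 - x := by linarith [hx.2]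
    positivity
  -- F 1 ≤ k * C
  have h2 : F 1 - F 0 ≤ (k : ℝ) * C * 1 - (k : ℝ) * C * 0 := by
    apply mvt_le hder (g' := fun _ => (k : ℝ) * C)
      (fun x => by simpa using (hasDerivAt_id x).const_mul ((k : ℝ) * C)) zero_le_one
    intro x hx
    have hx1 : (0 : ℝ) ≤ x := hx.1
    have hx2 : x ≤ 1 := hx.2
    have p1 : x ^ (l - 1) ≤ 1 := pow_le_one₀ hx1 hx2
    have p2 : (1 - x) ^ (k - l) ≤ 1 := pow_le_one₀ (by linarith) (by linarith)
    have p1' : (0 : ℝ) ≤ x ^ (l - 1) := pow_nonneg hx1 _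
    have p2' : (0 : ℝ) ≤ (1 - x) ^ (k - l) := pow_nonneg (by linarith) _
    have hkC : (0 : ℝ) ≤ (k : ℝ) * C := by positivity
    have hm : x ^ (l - 1) * (1 - x) ^ (k - l) ≤ 1 := mul_le_one₀ p1 p2' p2
    nlinarith
  -- derivative bound on [1, d]
  have habs : ∀ x ∈ Set.Icc (1 : ℝ) (d : ℝ),
      |(k : ℝ) * C * x ^ (l - 1) * (1 - x) ^ (k - l)| ≤ (k : ℝ) * C * x ^ (k - 1) := by
    intro x hx
    have hx1 : (1 : ℝ) ≤ x := hx.1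
    have q1 : |(1 - x) ^ (k - l)| ≤ x ^ (k - l) := by
      rw [abs_pow]
      apply pow_le_pow_left₀ (abs_nonneg _)
      rw [abs_sub_comm, abs_of_nonneg (by linarith)]
      linarith
    have q2 : |x ^ (l - 1)| = x ^ (l - 1) := abs_of_nonneg (pow_nonneg (by linarith) _)
    have q3 : x ^ (l - 1) * x ^ (k - l) = x ^ (k - 1) := by
      rw [← pow_add]; congr 1; omega
    have hkC : (0 : ℝ) ≤ (k : ℝ) * C := by positivity
    calc |(k : ℝ) * C * x ^ (l - 1) * (1 - x) ^ (k - l)|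
        = (k : ℝ) * C * (|x ^ (l - 1)| * |(1 - x) ^ (k - l)|) := by
          rw [abs_mul, abs_mul, abs_of_nonneg hkC]; ring
      _ ≤ (k : ℝ) * C * (x ^ (l - 1) * x ^ (k - l)) := by
          rw [q2]
          apply mul_le_mul_of_nonneg_left _ hkC
          apply mul_le_mul_of_nonneg_left q1 (pow_nonneg (by linarith) _)
      _ = (k : ℝ) * C * x ^ (k - 1) := by rw [q3]
  have hgder : ∀ x : ℝ, HasDerivAt (fun y => C * y ^ k) (C * ((k : ℝ) * x ^ (k - 1))) x :=
    fun x => (hasDerivAt_pow k x).const_mul C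
  have h3 : F (d : ℝ) - F 1 ≤ C * (d : ℝ) ^ k - C * 1 ^ k := by
    apply mvt_le hder hgder hdR
    intro x hx
    have := habs x hx
    have := abs_le.mp this
    linarith [this.2]
  have h4 : (-F (d : ℝ)) - (-F 1) ≤ C * (d : ℝ) ^ k - C * 1 ^ k := by
    apply mvt_le (f := fun y => -F y)
      (f' := fun x => -((k : ℝ) * C * x ^ (l - 1) * (1 - x) ^ (k - l)))
      (fun x => (hder x).neg) hgder hdR
    intro x hx
    have := abs_le.mp (habs x hx)
    linarith [this.1]
  -- combine
  rw [one_pow] at h3 h4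
  have hkC : (0 : ℝ) ≤ (k : ℝ) * C := by positivity
  have hbound : |F (d : ℝ)| ≤ C * ((d : ℝ) ^ k + (k : ℝ) - 1) := by
    rw [abs_le]
    constructor
    · nlinarith [h1, h4, hF0, hkC, hC0.le]
    · nlinarith [h2, h3, hF0, hkC, hC0.le]
  -- transfer to ℤ
  rw [← Int.cast_le (R := ℝ)]
  push_cast
  simpa [hFdef, hCdef] using hbound
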